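/- For every integer m ≥ 0, the convolution identity Σ_{l=0}^{m+1} (B_{2l}/(2l)!) · (B^{(2m+2)}_{2m+2-2l}(m+1)/(2m+2-2l)!) = 0 holds, where B_{2l} are Bernoulli numbers and B^{(α)}_k(t) generalized Bernoulli polynomials. -/

import Mathlib

noncomputable section

open scoped BigOperators

/-- The generalized Bernoulli polynomial `B^{(α)}_n(t)`, defined by the generating
function `(x/(eˣ-1))^α e^{tx} = Σ_n B^{(α)}_n(t) xⁿ/n!`. -/
def genBernoulli (α n : ℕ) (t : ℝ) : ℝ :=
  (n.factorial : ℝ) *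
    PowerSeries.coeff (R := ℝ) n
      (((PowerSeries.mk fun k => (1 : ℝ) / (k + 1).factorial)⁻¹) ^ α *
        PowerSeries.rescale t (PowerSeries.exp ℝ))

open PowerSeries Finset

private def E : ℝ⟦X⟧ := PowerSeries.mk fun k => (1 : ℝ) / (k + 1).factorial
private def B : ℝ⟦X⟧ := bernoulliPowerSeries ℝ

private lemma exp_sub_one_eq : exp ℝ - 1 = X * E := by
  ext n
  cases n with
  | zero => simp [E, coeff_exp]
  | succ n =>
      rw [map_sub, coeff_exp, coeff_succ_X_mul]
      simp [E, coeff_one, Nat.succ_ne_zero]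

private lemma B_mul_E : B * E = 1 := by
  have h := bernoulliPowerSeries_mul_exp_sub_one ℝ
  rw [exp_sub_one_eq] at h
  have : X * (B * E) = X * 1 := by
    rw [mul_one]; rw [show X * (B * E) = bernoulliPowerSeries ℝ * (X * E) by rw [B]; ring]; exact h
  exact mul_left_cancel₀ X_ne_zero this

private lemma E_inv : E⁻¹ = B := by
  rw [PowerSeries.inv_eq_iff_mul_eq_one]
  · exact B_mul_E
  · simp [E]

private lemma coeff_B (n : ℕ) : coeff n B = (bernoulli n : ℝ) / n.factorial := by
  simp [B, bernoulliPowerSeries, coeff_mk]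

private lemma hB_mul : B * (exp ℝ - 1) = X := bernoulliPowerSeries_mul_exp_sub_one ℝ

private lemma hBexp : B * exp ℝ = B + X := by linear_combination hB_mul

private lemma Dexp0 : d⁄dX ℝ (exp ℝ) = exp ℝ := by
  ext n
  rw [coeff_derivative, coeff_exp, coeff_exp, eq_ratCast, eq_ratCast, Nat.factorial_succ]
  have h1 : (n.factorial : ℝ) ≠ 0 := by positivity
  push_cast
  field_simp

private lemma Drescale0 (t : ℝ) :
    d⁄dX ℝ (rescale t (exp ℝ)) = C t * rescale t (exp ℝ) := by
  ext n
  rw [coeff_derivative, coeff_C_mul, coeff_rescale, coeff_rescale, coeff_exp, coeff_exp,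
    eq_ratCast, eq_ratCast, Nat.factorial_succ]
  have h1 : (n.factorial : ℝ) ≠ 0 := by positivity
  push_cast
  field_simp
  ring

private lemma hDB : X * d⁄dX ℝ B = B - B ^ 2 - X * B := by
  have h1 : d⁄dX ℝ (B * (exp ℝ - 1)) = d⁄dX ℝ X := by rw [hB_mul]
  rw [Derivation.leibniz, derivative_X, map_sub, Dexp0, Derivation.map_one_eq_zero,
    smul_eq_mul, smul_eq_mul, sub_zero] at h1
  have h3 : (exp ℝ - 1) * d⁄dX ℝ B = 1 - B * exp ℝ := by linear_combination h1
  calc X * d⁄dX ℝ B = B * (exp ℝ - 1) * d⁄dX ℝ B := by rw [hB_mul]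
    _ = B * ((exp ℝ - 1) * d⁄dX ℝ B) := by ring
    _ = B * (1 - B * exp ℝ) := by rw [h3]
    _ = B - B * (B * exp ℝ) := by ring
    _ = B - B * (B + X) := by rw [hBexp]
    _ = B - B ^ 2 - X * B := by ring

private lemma key (t : ℝ) (n : ℕ) :
    ((n : ℝ) + 1) * coeff (n + 1) (B ^ (n + 2) * rescale t (exp ℝ)) =
      (t - ((n : ℝ) + 1)) * coeff n (B ^ (n + 1) * rescale t (exp ℝ)) := by
  set R := rescale t (exp ℝ) with hR
  set G := B ^ (n + 1) * R with hG
  have hc : ((n + 1 : ℕ) : ℝ⟦X⟧) = C ((n : ℝ) + 1) := by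
    rw [show ((n : ℝ) + 1) = ((n + 1 : ℕ) : ℝ) by push_cast; ring, map_natCast]
  have hd : d⁄dX ℝ G = B ^ (n + 1) * (C t * R) +
      R * (((n + 1 : ℕ) : ℝ⟦X⟧) * (B ^ n * d⁄dX ℝ B)) := by
    rw [hG, Derivation.leibniz, Derivation.leibniz_pow, Drescale0]
    simp only [smul_eq_mul, nsmul_eq_mul, Nat.add_sub_cancel]
    rfl
  have hx : X * d⁄dX ℝ G =
      C t * (X * G) + C ((n : ℝ) + 1) * (G - B ^ (n + 2) * R - X * G) := by
    rw [hd, hG]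
    linear_combination (((n + 1 : ℕ) : ℝ⟦X⟧) * R * B ^ n) * hDB +
      (R * (B ^ (n + 1) - B ^ (n + 2) - X * B ^ (n + 1))) * hc
  have hcoeff := congrArg (coeff (n + 1)) hx
  rw [coeff_succ_X_mul, coeff_derivative, map_add, coeff_C_mul, coeff_C_mul,
    coeff_succ_X_mul, map_sub, map_sub, coeff_succ_X_mul] at hcoeff
  linear_combination hcoeff

private lemma vanish (m : ℕ) : ∀ n, m + 1 ≤ n →
    coeff n (B ^ (n + 1) * rescale ((m : ℝ) + 1) (exp ℝ)) = 0 := by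
  intro n hn
  induction n, hn using Nat.le_induction with
  | base =>
      have h := key ((m : ℝ) + 1) m
      have hne : ((m : ℝ) + 1) ≠ 0 := by positivity
      have h0 : ((m : ℝ) + 1) *
          coeff (m + 1) (B ^ (m + 2) * rescale ((m : ℝ) + 1) (exp ℝ)) = 0 := by
        rw [h]; ring
      exact (mul_eq_zero.mp h0).resolve_left hne
  | succ n hn ih =>
      have h := key ((m : ℝ) + 1) n
      have hne : ((n : ℝ) + 1) ≠ 0 := by positivity
      have h0 : ((n : ℝ) + 1) *
          coeff (n + 1) (B ^ (n + 2) * rescale ((m : ℝ) + 1) (exp ℝ)) = 0 := by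
        rw [h, ih]; ring
      exact (mul_eq_zero.mp h0).resolve_left hne

private lemma bernoulli_odd_zero {k : ℕ} (hk : Odd k) (h1 : k ≠ 1) : bernoulli k = 0 := by
  rw [bernoulli_eq_bernoulli'_of_ne_one h1]
  exact bernoulli'_eq_zero_of_odd hk (by rcases hk with ⟨r, rfl⟩; omega)

/-- the convolution identity
`Σ_{l=0}^{m+1} (B_{2l}/(2l)!)·(B^{(2m+2)}_{2m+2-2l}(m+1)/(2m+2-2l)!) = 0`,
where `B_{2l}` are the Bernoulli numbers. -/
theorem stmt11 (m : ℕ) :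
    ∑ l ∈ Finset.range (m + 2),
        ((bernoulli (2 * l) : ℝ) / ((2 * l).factorial : ℝ))
          * (genBernoulli (2 * m + 2) (2 * m + 2 - 2 * l) ((m : ℝ) + 1)
              / ((2 * m + 2 - 2 * l).factorial : ℝ))
      = 0 := by
  set R := rescale ((m : ℝ) + 1) (exp ℝ) with hR
  set C2 := B ^ (2 * m + 2) * R with hC2
  set f : ℕ → ℝ := fun k => coeff k B * coeff (2 * m + 2 - k) C2 with hf
  have hgen : ∀ j, genBernoulli (2 * m + 2) j ((m : ℝ) + 1) / (j.factorial : ℝ)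
      = coeff j C2 := by
    intro j
    have hj : (j.factorial : ℝ) ≠ 0 := by positivity
    rw [genBernoulli, show (PowerSeries.mk fun k => (1 : ℝ) / (k + 1).factorial) = E from rfl,
      E_inv, ← hR, ← hC2]
    field_simp
  have hterm : ∀ l ∈ Finset.range (m + 2),
      ((bernoulli (2 * l) : ℝ) / ((2 * l).factorial : ℝ))
          * (genBernoulli (2 * m + 2) (2 * m + 2 - 2 * l) ((m : ℝ) + 1)
              / ((2 * m + 2 - 2 * l).factorial : ℝ)) = f (2 * l) := by
    intro l _
    rw [hgen]
    show _ = coeff (2 * l) B * coeff (2 * m + 2 - 2 * l) C2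
    rw [coeff_B]
  rw [Finset.sum_congr rfl hterm]
  have himg : (Finset.range (2 * m + 3)).filter (fun k => Even k)
      = (Finset.range (m + 2)).image (fun l => 2 * l) := by
    ext k
    simp only [Finset.mem_filter, Finset.mem_range, Finset.mem_image]
    constructor
    · rintro ⟨hk, r, hr⟩
      exact ⟨r, by omega, by omega⟩
    · rintro ⟨l, hl, rfl⟩
      exact ⟨by omega, l, by omega⟩
  have hodd : ∑ k ∈ (Finset.range (2 * m + 3)).filter (fun k => ¬ Even k), f k = 0 := by
    apply Finset.sum_eq_zero
    intro k hk
    simp only [Finset.mem_filter, Finset.mem_range] at hk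
    obtain ⟨hk1, hk2⟩ := hk
    by_cases h1 : k = 1
    · subst h1
      have h2 : coeff (2 * m + 1) C2 = 0 := by
        rw [hC2, show 2 * m + 2 = (2 * m + 1) + 1 from by omega]
        exact vanish m (2 * m + 1) (by omega)
      show coeff 1 B * coeff (2 * m + 2 - 1) C2 = 0
      rw [show 2 * m + 2 - 1 = 2 * m + 1 from by omega, h2, mul_zero]
    · have hko : Odd k := Nat.odd_iff.mpr (by rw [Nat.even_iff] at hk2; omega)
      show coeff k B * coeff (2 * m + 2 - k) C2 = 0
      rw [coeff_B, bernoulli_odd_zero hko h1]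
      simp
  have heven : ∑ k ∈ (Finset.range (2 * m + 3)).filter (fun k => Even k), f k
      = ∑ l ∈ Finset.range (m + 2), f (2 * l) := by
    rw [himg, Finset.sum_image (by intro a _ b _ h; dsimp only at h; omega)]
  have htotal : ∑ k ∈ Finset.range (2 * m + 3), f k = 0 := by
    have hconv : ∑ k ∈ Finset.range (2 * m + 3), f k = coeff (2 * m + 2) (B * C2) := by
      rw [coeff_mul, Finset.Nat.sum_antidiagonal_eq_sum_range_succ_mk]
    rw [hconv, hC2, show B * (B ^ (2 * m + 2) * R) = B ^ (2 * m + 2 + 1) * R from by ring]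
    exact vanish m (2 * m + 2) (by omega)
  rw [← heven]
  have := Finset.sum_filter_add_sum_filter_not (Finset.range (2 * m + 3)) (fun k => Even k) f
  rw [hodd, add_zero] at this
  rw [this, htotal]
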